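/- Let M22 ≤ 0 be a symmetric negative semidefinite ℓ×ℓ matrix and suppose Z, Ẑ ∈ ℝ^{ℓ×k} are such that for all γ ∈ ℝ, [I; Z + γẐ]ᵀ M [I; Z + γẐ] ≥ 0 where M = [[M11, 0],[0, M22]] with M11 symmetric. Then M22 Ẑ = 0. -/

import Mathlib

open Matrix

lemma quad_coeff_zero {a b c : ℝ} (ha : a ≤ 0)
    (h : ∀ γ : ℝ, 0 ≤ a * γ ^ 2 + b * γ + c) : a = 0 := by
  by_contra ha'
  have ha2 : a < 0 := lt_of_le_of_ne ha ha'
  have hc : 0 ≤ c := by simpa using h 0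
  set γ := Real.sqrt ((c + 1) / (-a)) with hγdef
  have hγ : γ ^ 2 = (c + 1) / (-a) := Real.sq_sqrt (div_nonneg (by linarith) (by linarith))
  have key : a * γ ^ 2 = -(c + 1) := by
    rw [hγ]
    field_simp
  have h1 := h γ
  have h2 := h (-γ)
  nlinarith

/-- Perturbation argument from the proof of the matrix Finsler's lemma:
if `[I; Z+γẐ]ᵀ M [I; Z+γẐ] ≥ 0` for all `γ`, where `M = diag(M11, M22)` with
`M22 ≤ 0`, then `M22 Ẑ = 0`. -/
theorem perturbation_argument {k l : ℕ}
    (M11 : Matrix (Fin k) (Fin k) ℝ)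
    (M22 : Matrix (Fin l) (Fin l) ℝ)
    (Z Zhat : Matrix (Fin l) (Fin k) ℝ)
    (hM11 : M11ᵀ = M11) (hM22 : M22ᵀ = M22)
    (hM22neg : (-M22).PosSemidef)
    (h : ∀ γ : ℝ,
      ((fromRows (1 : Matrix (Fin k) (Fin k) ℝ) (Z + γ • Zhat))ᵀ *
        fromBlocks M11 0 0 M22 *
        fromRows (1 : Matrix (Fin k) (Fin k) ℝ) (Z + γ • Zhat)).PosSemidef) :
    M22 * Zhat = 0 := by
  -- Step 1: rewrite the block product as `M11 + Wᵀ M22 W` with `W = Z + γ•Zhat`.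
  have hprod : ∀ γ : ℝ,
      (M11 + (Z + γ • Zhat)ᵀ * M22 * (Z + γ • Zhat)).PosSemidef := by
    intro γ
    have := h γ
    rw [transpose_fromRows, Matrix.mul_assoc, fromBlocks_mul_fromRows,
      fromCols_mul_fromRows] at this
    simpa [Matrix.mul_assoc] using this
  -- Step 2: for every vector x, `M22 *ᵥ (Zhat *ᵥ x) = 0`.
  have key : ∀ x : Fin k → ℝ, M22 *ᵥ (Zhat *ᵥ x) = 0 := by
    intro x
    set u := Z *ᵥ x with hu
    set w := Zhat *ᵥ x with hw
    -- quadratic form values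
    have hquad : ∀ γ : ℝ,
        0 ≤ (w ⬝ᵥ M22 *ᵥ w) * γ ^ 2 + (w ⬝ᵥ M22 *ᵥ u + u ⬝ᵥ M22 *ᵥ w) * γ
          + (x ⬝ᵥ M11 *ᵥ x + u ⬝ᵥ M22 *ᵥ u) := by
      intro γ
      have h0 := (hprod γ).dotProduct_mulVec_nonneg x
      rw [star_trivial] at h0
      have expand : x ⬝ᵥ (M11 + (Z + γ • Zhat)ᵀ * M22 * (Z + γ • Zhat)) *ᵥ x =
          (w ⬝ᵥ M22 *ᵥ w) * γ ^ 2 + (w ⬝ᵥ M22 *ᵥ u + u ⬝ᵥ M22 *ᵥ w) * γ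
            + (x ⬝ᵥ M11 *ᵥ x + u ⬝ᵥ M22 *ᵥ u) := by
        rw [add_mulVec, dotProduct_add, Matrix.mul_assoc, ← mulVec_mulVec,
          ← mulVec_mulVec, dotProduct_mulVec x ((Z + γ • Zhat)ᵀ), vecMul_transpose,
          add_mulVec, smul_mulVec, ← hu, ← hw, mulVec_add,
          mulVec_smul]
        simp only [dotProduct_add, add_dotProduct, smul_dotProduct,
          dotProduct_smul, smul_eq_mul]
        ring
      rw [expand] at h0
      linarith
    have hwle : w ⬝ᵥ M22 *ᵥ w ≤ 0 := by
      have := hM22neg.dotProduct_mulVec_nonneg w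
      simp only [neg_mulVec, dotProduct_neg, star_trivial] at this
      linarith
    have hzero : w ⬝ᵥ M22 *ᵥ w = 0 := quad_coeff_zero hwle hquad
    have : (-M22) *ᵥ w = 0 := by
      rw [← (hM22neg.dotProduct_mulVec_zero_iff w)]
      simp [neg_mulVec, hzero]
    have := congrArg Neg.neg this
    simpa [neg_mulVec] using this
  -- Step 3: conclude the matrix identity.
  ext i j
  have := congrFun (key (Pi.single j 1)) i
  simpa [mulVec_single, mulVec_mulVec, mul_apply, mulVec, dotProduct, Pi.single_apply] using this
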